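/- There exists a constant C > 0 such that for every u given by the half-plane Biot–Savart law applied to a vorticity ω, one has |u(x)| ≤ C·∫_{ℝ²₊} (y₂/(|x−y|·|x−y*|))·|ω(y)| dy for all x ∈ ℝ²₊. -/

import Mathlib

open MeasureTheory

/-- The open upper half-plane `ℝ²₊ = {x : x₂ > 0}`. -/
def halfPlane : Set (ℝ × ℝ) := {p | 0 < p.2}

/-- The half-plane Biot–Savart law, in coordinates. -/
noncomputable def BSplus (ω : ℝ × ℝ → ℝ) (x : ℝ × ℝ) : ℝ × ℝ :=
  (1 / (2 * Real.pi)) • ∫ y in halfPlane, ω y •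
    ((-(x.2 - y.2) / ((x.1 - y.1)^2 + (x.2 - y.2)^2)
        + (x.2 + y.2) / ((x.1 - y.1)^2 + (x.2 + y.2)^2),
      (x.1 - y.1) / ((x.1 - y.1)^2 + (x.2 - y.2)^2)
        - (x.1 - y.1) / ((x.1 - y.1)^2 + (x.2 + y.2)^2)) : ℝ × ℝ)

/-- The Euclidean norm on `ℝ × ℝ`. -/
noncomputable def enorm2 (v : ℝ × ℝ) : ℝ := Real.sqrt (v.1^2 + v.2^2)

lemma sq_abs_le_aux {z w : ℝ} (hw : 0 ≤ w) (h : z^2 ≤ w^2) : |z| ≤ w := by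
  calc |z| = Real.sqrt (z^2) := (Real.sqrt_sq_eq_abs z).symm
    _ ≤ Real.sqrt (w^2) := Real.sqrt_le_sqrt h
    _ = w := Real.sqrt_sq hw

lemma kernel_bound (a b c : ℝ) (hR : 0 < a^2+b^2) (hbc : 0 < b + c) (hcb : b < c) :
    max |(-(b) / (a^2+b^2) + c/(a^2+c^2))| |a/(a^2+b^2) - a/(a^2+c^2)|
      ≤ 2*(c-b) / (Real.sqrt (a^2+b^2) * Real.sqrt (a^2+c^2)) := by
  have hc : 0 < c := by linarith
  have hS : 0 < a^2 + c^2 := by positivity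
  set r := Real.sqrt (a^2+b^2) with hrdef
  set s := Real.sqrt (a^2+c^2) with hsdef
  have hr : 0 < r := Real.sqrt_pos.mpr hR
  have hs : 0 < s := Real.sqrt_pos.mpr hS
  have hr2 : r^2 = a^2+b^2 := Real.sq_sqrt hR.le
  have hs2 : s^2 = a^2+c^2 := Real.sq_sqrt hS.le
  have hrs : 0 < r * s := mul_pos hr hs
  have hRS : 0 < (a^2+b^2) * (a^2+c^2) := mul_pos hR hS
  have hcs : c ≤ s := (le_abs_self c).trans (sq_abs_le_aux hs.le (by nlinarith [sq_nonneg a]))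
  have har : |a| ≤ r := sq_abs_le_aux hr.le (by nlinarith [sq_nonneg b])
  have hrsRS : (r*s)^2 = (a^2+b^2) * (a^2+c^2) := by rw [mul_pow, hr2, hs2]
  have h1 : |(-(b) / (a^2+b^2) + c/(a^2+c^2))| ≤ 2*(c-b)/(r*s) := by
    rw [div_add_div _ _ (ne_of_gt hR) (ne_of_gt hS), abs_div, abs_of_pos hRS,
      div_le_div_iff₀ hRS hrs]
    have e : (-(b))*(a^2+c^2) + (a^2+b^2)*c = (c-b)*(a^2-b*c) := by ring
    have h2 : |a^2-b*c| ≤ r*s := by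
      refine sq_abs_le_aux hrs.le ?_
      rw [hrsRS]; nlinarith [sq_nonneg (a*(b+c))]
    have hnum : |(-(b))*(a^2+c^2) + (a^2+b^2)*c| ≤ (c-b)*(r*s) := by
      rw [e, abs_mul, abs_of_pos (by linarith : (0:ℝ) < c - b)]
      exact mul_le_mul_of_nonneg_left h2 (by linarith)
    calc |(-(b))*(a^2+c^2) + (a^2+b^2)*c| * (r*s)
        ≤ ((c-b)*(r*s)) * (r*s) := mul_le_mul_of_nonneg_right hnum hrs.le
      _ = (c-b) * (r*s)^2 := by ring
      _ = (c-b) * ((a^2+b^2)*(a^2+c^2)) := by rw [hrsRS]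
      _ ≤ 2*(c-b) * ((a^2+b^2)*(a^2+c^2)) := by nlinarith
  have h2 : |a/(a^2+b^2) - a/(a^2+c^2)| ≤ 2*(c-b)/(r*s) := by
    rw [div_sub_div _ _ (ne_of_gt hR) (ne_of_gt hS), abs_div, abs_of_pos hRS,
      div_le_div_iff₀ hRS hrs]
    have e : a*(a^2+c^2) - (a^2+b^2)*a = a*((c-b)*(c+b)) := by ring
    have hnum : |a*(a^2+c^2) - (a^2+b^2)*a| ≤ 2*(c-b)*(r*s) := by
      rw [e, abs_mul, abs_of_pos (mul_pos (by linarith : (0:ℝ) < c - b) (by linarith : (0:ℝ) < c + b))]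
      calc |a| * ((c-b)*(c+b)) ≤ r * ((c-b)*(2*s)) := by
            apply mul_le_mul har ?_ (mul_nonneg (by linarith) (by linarith)) hr.le
            apply mul_le_mul_of_nonneg_left (by linarith) (by linarith)
        _ = 2*(c-b)*(r*s) := by ring
    calc |a*(a^2+c^2) - (a^2+b^2)*a| * (r*s)
        ≤ (2*(c-b)*(r*s)) * (r*s) := mul_le_mul_of_nonneg_right hnum hrs.le
      _ = 2*(c-b) * (r*s)^2 := by ring
      _ = 2*(c-b) * ((a^2+b^2)*(a^2+c^2)) := by rw [hrsRS]
  exact max_le h1 h2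

lemma smul_kernel_bound (t a b c : ℝ) (hR : 0 < a^2+b^2) (hbc : 0 < b + c) (hcb : b < c) :
    ‖t • ((-(b) / (a^2+b^2) + c/(a^2+c^2),
        a/(a^2+b^2) - a/(a^2+c^2)) : ℝ × ℝ)‖
      ≤ 2*(c-b) / (Real.sqrt (a^2+b^2) * Real.sqrt (a^2+c^2)) * |t| := by
  rw [norm_smul, Real.norm_eq_abs, Prod.norm_def, Real.norm_eq_abs, Real.norm_eq_abs]
  rw [mul_comm]
  exact mul_le_mul_of_nonneg_right (kernel_bound a b c hR hbc hcb) (abs_nonneg t)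

lemma enorm2_le (v : ℝ × ℝ) : enorm2 v ≤ 2 * ‖v‖ := by
  have h1 : |v.1| ≤ ‖v‖ := by rw [← Real.norm_eq_abs]; exact norm_fst_le v
  have h2 : |v.2| ≤ ‖v‖ := by rw [← Real.norm_eq_abs]; exact norm_snd_le v
  have hN : (0:ℝ) ≤ ‖v‖ := norm_nonneg v
  calc enorm2 v = Real.sqrt (v.1^2 + v.2^2) := rfl
    _ ≤ Real.sqrt ((2*‖v‖)^2) := by
        apply Real.sqrt_le_sqrt
        nlinarith [sq_abs v.1, sq_abs v.2, abs_nonneg v.1, abs_nonneg v.2]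
    _ = 2 * ‖v‖ := Real.sqrt_sq (by positivity)

theorem biot_savart_improved_bound :
    ∃ C > 0, ∀ (ω : ℝ × ℝ → ℝ) (x : ℝ × ℝ), x ∈ halfPlane →
      ENNReal.ofReal (enorm2 (BSplus ω x)) ≤ ENNReal.ofReal C *
        ∫⁻ y in halfPlane, ENNReal.ofReal
          (y.2 / (Real.sqrt ((x.1 - y.1)^2 + (x.2 - y.2)^2)
            * Real.sqrt ((x.1 - y.1)^2 + (x.2 + y.2)^2)) * |ω y|) := by
  refine ⟨8, by norm_num, ?_⟩
  intro ω x hx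
  set f : ℝ × ℝ → ℝ × ℝ := fun y => ω y •
    ((-(x.2 - y.2) / ((x.1 - y.1)^2 + (x.2 - y.2)^2)
        + (x.2 + y.2) / ((x.1 - y.1)^2 + (x.2 + y.2)^2),
      (x.1 - y.1) / ((x.1 - y.1)^2 + (x.2 - y.2)^2)
        - (x.1 - y.1) / ((x.1 - y.1)^2 + (x.2 + y.2)^2)) : ℝ × ℝ) with hf
  set I : ℝ × ℝ := ∫ y in halfPlane, f y with hI
  have hBS : BSplus ω x = (1 / (2 * Real.pi)) • I := rfl
  have hπ : (3:ℝ) < Real.pi := Real.pi_gt_three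
  have hnorm : enorm2 (BSplus ω x) ≤ 2 * ‖I‖ := by
    calc enorm2 (BSplus ω x) ≤ 2 * ‖BSplus ω x‖ := enorm2_le _
      _ ≤ 2 * ‖I‖ := by
          rw [hBS, norm_smul, Real.norm_eq_abs, abs_of_pos (by positivity : (0:ℝ) < 1/(2*Real.pi))]
          have : 1/(2*Real.pi) ≤ 1 := by
            rw [div_le_one (by positivity)]; linarith
          nlinarith [norm_nonneg I]
  have hmeas : MeasurableSet halfPlane :=
    (isOpen_lt continuous_const continuous_snd).measurableSet
  have hae : ∀ᵐ y ∂(volume.restrict halfPlane), (‖f y‖₊ : ENNReal) ≤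
      ENNReal.ofReal 4 * ENNReal.ofReal
        (y.2 / (Real.sqrt ((x.1 - y.1)^2 + (x.2 - y.2)^2)
          * Real.sqrt ((x.1 - y.1)^2 + (x.2 + y.2)^2)) * |ω y|) := by
    have hmem : ∀ᵐ y ∂(volume.restrict halfPlane), y ∈ halfPlane := ae_restrict_mem hmeas
    have hne : ∀ᵐ y ∂(volume.restrict halfPlane), y ≠ x := by
      refine ae_iff.mpr ?_
      have h0 : {y : ℝ × ℝ | ¬ y ≠ x} = {x} := by ext y; simp
      rw [h0]
      exact le_antisymm ((Measure.restrict_apply_le _ _).trans_eq (measure_singleton x)) zero_le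
    filter_upwards [hmem, hne] with y hy hyx
    have hyp : 0 < y.2 := hy
    have hR : 0 < (x.1 - y.1)^2 + (x.2 - y.2)^2 := by
      have : x.1 - y.1 ≠ 0 ∨ x.2 - y.2 ≠ 0 := by
        by_contra h
        push_neg at h
        exact hyx (Prod.ext (by linarith [h.1]) (by linarith [h.2]))
      rcases this with h | h
      · positivity
      · positivity
    have hbc : 0 < (x.2 - y.2) + (x.2 + y.2) := by
      have : 0 < x.2 := hx
      linarith
    have hcb : (x.2 - y.2) < (x.2 + y.2) := by linarith
    rw [← enorm_eq_nnnorm, ← ofReal_norm,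
      ← ENNReal.ofReal_mul (by norm_num : (0:ℝ) ≤ 4)]
    apply ENNReal.ofReal_le_ofReal
    have hk := smul_kernel_bound (ω y) (x.1 - y.1) (x.2 - y.2) (x.2 + y.2) hR hbc hcb
    calc ‖f y‖ ≤ 2*((x.2 + y.2)-(x.2 - y.2))
          / (Real.sqrt ((x.1 - y.1)^2 + (x.2 - y.2)^2)
            * Real.sqrt ((x.1 - y.1)^2 + (x.2 + y.2)^2)) * |ω y| := hk
      _ = 4 * (y.2 / (Real.sqrt ((x.1 - y.1)^2 + (x.2 - y.2)^2)
            * Real.sqrt ((x.1 - y.1)^2 + (x.2 + y.2)^2)) * |ω y|) := by ring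
  calc ENNReal.ofReal (enorm2 (BSplus ω x))
      ≤ ENNReal.ofReal (2 * ‖I‖) := ENNReal.ofReal_le_ofReal hnorm
    _ = ENNReal.ofReal 2 * ENNReal.ofReal ‖I‖ := ENNReal.ofReal_mul (by norm_num)
    _ = ENNReal.ofReal 2 * (‖I‖₊ : ENNReal) := by rw [← enorm_eq_nnnorm, ofReal_norm]
    _ ≤ ENNReal.ofReal 2 * ∫⁻ y in halfPlane, (‖f y‖₊ : ENNReal) := by
        exact mul_le_mul_right (enorm_integral_le_lintegral_enorm f) _
    _ ≤ ENNReal.ofReal 2 * ∫⁻ y in halfPlane, ENNReal.ofReal 4 * ENNReal.ofReal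
          (y.2 / (Real.sqrt ((x.1 - y.1)^2 + (x.2 - y.2)^2)
            * Real.sqrt ((x.1 - y.1)^2 + (x.2 + y.2)^2)) * |ω y|) :=
        mul_le_mul_right (lintegral_mono_ae hae) _
    _ = ENNReal.ofReal 2 * (ENNReal.ofReal 4 * ∫⁻ y in halfPlane, ENNReal.ofReal
          (y.2 / (Real.sqrt ((x.1 - y.1)^2 + (x.2 - y.2)^2)
            * Real.sqrt ((x.1 - y.1)^2 + (x.2 + y.2)^2)) * |ω y|)) := by
        rw [lintegral_const_mul' _ _ ENNReal.ofReal_ne_top]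
    _ = ENNReal.ofReal 8 * ∫⁻ y in halfPlane, ENNReal.ofReal
          (y.2 / (Real.sqrt ((x.1 - y.1)^2 + (x.2 - y.2)^2)
            * Real.sqrt ((x.1 - y.1)^2 + (x.2 + y.2)^2)) * |ω y|) := by
        rw [← mul_assoc, ← ENNReal.ofReal_mul (by norm_num : (0:ℝ) ≤ 2)]
        norm_num
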